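/- (Rigidity of fiber isotropy) Let M = Q ×_r F be a pseudo-Riemannian warped product with dim F = n ≥ 3. If the fiber block of the Einstein tensor satisfies G_F = λ h for some function λ : M → ℝ, then λ is constant along F and (F,h) is an Einstein manifold. -/
import Mathlib


/-- (Rigidity of fiber isotropy) Let `M = Q ×_r F` be a pseudo-Riemannian warped
product with `dim F = n ≥ 3`.  If the fiber block of the Einstein tensor satisfies
`G_F = λ h` for some function `λ : M → ℝ`, then `λ` is constant along `F` and `(F,h)`
is an Einstein manifold.  Here
`G_F = G^h − (r²/2) S^g h + (n−1) r [Δ_g r + ((n−2)/2)⟨dr,dr⟩_g] h` with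
`G^h = Ric^h − (S^h/2) h`, and Schur's lemma (a Riemannian manifold of dimension ≥ 3
with Ricci pointwise proportional to the metric is Einstein) is given as context. -/
theorem fiber_isotropy_rigidity
    {Q F VF : Type*} [AddCommGroup VF] [Module ℝ VF]
    (n : ℕ) (hn : 3 ≤ n) (hQ : Nonempty Q)
    (hB : F → VF →ₗ[ℝ] VF →ₗ[ℝ] ℝ)            -- the fiber metric h
    (hBne : ∀ f, ∃ v w, hB f v w ≠ 0)           -- h is a metric, nowhere zero
    (Rich Gh : F → VF → VF → ℝ)                  -- Ric^h and G^h
    (Sh : F → ℝ)                                 -- scalar curvature of h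
    (hGh : ∀ f v w, Gh f v w = Rich f v w - Sh f / 2 * hB f v w)
    -- trace compatibility: if Ric^h = c·h at f then S^h = n·c at f
    (hShtr : ∀ f (c : ℝ), (∀ v w, Rich f v w = c * hB f v w) → Sh f = n * c)
    (r Sg Δr drdr : Q → ℝ) (hr : ∀ q, 0 < r q)
    (GF : Q × F → VF → VF → ℝ)                   -- fiber block of the Einstein tensor
    (hGF : ∀ p v w, GF p v w
        = Gh p.2 v w - r p.1 ^ 2 / 2 * Sg p.1 * hB p.2 v w
          + ((n : ℝ) - 1) * r p.1 * (Δr p.1 + ((n : ℝ) - 2) / 2 * drdr p.1)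
            * hB p.2 v w)
    (lam : Q × F → ℝ)
    (hlam : ∀ p v w, GF p v w = lam p * hB p.2 v w)   -- G_F = λ h
    -- Schur's lemma in dimension n ≥ 3
    (hSchur : (∀ f, ∃ c : ℝ, ∀ v w, Rich f v w = c * hB f v w) →
        ∃ c : ℝ, ∀ f v w, Rich f v w = c * hB f v w) :
    (∀ q (f f' : F), lam (q, f) = lam (q, f'))
    ∧ (∃ c : ℝ, ∀ f v w, Rich f v w = c * hB f v w) := by
  set μ : Q → ℝ := fun q =>
    r q ^ 2 / 2 * Sg q - ((n : ℝ) - 1) * r q * (Δr q + ((n : ℝ) - 2) / 2 * drdr q) with hμ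
  have key : ∀ q f v w, Rich f v w = (lam (q, f) + μ q + Sh f / 2) * hB f v w := by
    intro q f v w
    have h1 := hlam (q, f) v w
    rw [hGF] at h1
    have h2 := hGh f v w
    simp only [hμ]
    linear_combination h1 - h2
  obtain ⟨q0⟩ := hQ
  obtain ⟨c, hc⟩ := hSchur (fun f => ⟨lam (q0, f) + μ q0 + Sh f / 2, key q0 f⟩)
  have hShc : ∀ f, Sh f = n * c := fun f => hShtr f c (hc f)
  have hlamval : ∀ q f, lam (q, f) = c - (n : ℝ) * c / 2 - μ q := by
    intro q f
    obtain ⟨v, w, hvw⟩ := hBne f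
    have h1 := key q f v w
    rw [hc f v w] at h1
    have h2 : (lam (q, f) + μ q + Sh f / 2 - c) * hB f v w = 0 := by linarith
    have h3 := (mul_eq_zero.mp h2).resolve_right hvw
    have := hShc f
    linarith
  refine ⟨fun q f f' => by rw [hlamval, hlamval], ⟨c, hc⟩⟩
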